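/- Let S be the subgroup of U(2,1;O₁₁) consisting of matrices fixing q∞, and let S̄ = S/{±I} (the stabiliser of q∞ in PU(2,1;O₁₁)). Let P be the group given by the presentation with generators r₁, r₂, r₃, t and relators r₁², t r₁ t⁻¹ r₁⁻¹, t r₂⁻², t r₃⁻², t (r₁ r₃ r₂)⁻². Then the assignment r₁ ↦ [R₁], r₂ ↦ [R₂], r₃ ↦ [R₃], t ↦ [T] (classes modulo {±I}) extends to a group isomorphism from P onto S̄. -/

import Mathlib

open Matrix Complex

noncomputable section

def Jmat : Matrix (Fin 3) (Fin 3) ℂ := !![0,0,1; 0,1,0; 1,0,0]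

lemma Jmat_mul_Jmat : Jmat * Jmat = 1 := by
  simp [Jmat, Matrix.mul_fin_three, Matrix.one_fin_three]

lemma Jmat_conjTranspose : Jmatᴴ = Jmat := by
  ext i j
  fin_cases i <;> fin_cases j <;>
    simp [Jmat, Matrix.conjTranspose_apply, Matrix.vecHead, Matrix.vecTail]

/-- `ω₁₁ = (1 + i√11)/2`. -/
def ω : ℂ := (1 + Complex.I * (√11 : ℝ)) / 2

/-- The ring of integers `O₁₁ = ℤ[ω₁₁]` of `ℚ(√-11)`, as a subset of `ℂ`. -/
def O11 : Set ℂ := {z | ∃ a b : ℤ, z = (a : ℂ) + (b : ℂ) * ω}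

lemma O11.zero : (0:ℂ) ∈ O11 := ⟨0, 0, by simp⟩
lemma O11.one : (1:ℂ) ∈ O11 := ⟨1, 0, by simp⟩
lemma O11.add {x y : ℂ} (hx : x ∈ O11) (hy : y ∈ O11) : x + y ∈ O11 := by
  obtain ⟨a,b,rfl⟩ := hx; obtain ⟨c,e,rfl⟩ := hy
  exact ⟨a+c, b+e, by push_cast; ring⟩
lemma O11.neg {x : ℂ} (hx : x ∈ O11) : -x ∈ O11 := by
  obtain ⟨a,b,rfl⟩ := hx
  exact ⟨-a, -b, by push_cast; ring⟩
lemma sqrt11_sq : ((√11:ℝ):ℂ) * ((√11:ℝ):ℂ) = 11 := by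
  rw [← Complex.ofReal_mul]; norm_num [Real.mul_self_sqrt]
lemma hω : ω * ω = ω - 3 := by
  rw [ω]
  linear_combination (((√11:ℝ):ℂ)^2/4) * Complex.I_mul_I + (-1/4 : ℂ) * sqrt11_sq
lemma O11.mul {x y : ℂ} (hx : x ∈ O11) (hy : y ∈ O11) : x * y ∈ O11 := by
  obtain ⟨a,b,rfl⟩ := hx; obtain ⟨c,e,rfl⟩ := hy
  refine ⟨a*c - 3*(b*e), a*e + b*c + b*e, ?_⟩
  push_cast
  linear_combination ((b:ℂ) * (e:ℂ)) * hω
lemma hconjω : (starRingEnd ℂ) ω = 1 - ω := by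
  rw [ω, map_div₀, map_add, _root_.map_one, _root_.map_mul, Complex.conj_I, Complex.conj_ofReal, map_ofNat]
  ring
lemma O11.star {x : ℂ} (hx : x ∈ O11) : (starRingEnd ℂ) x ∈ O11 := by
  obtain ⟨a,b,rfl⟩ := hx
  refine ⟨a + b, -b, ?_⟩
  rw [map_add, _root_.map_mul, map_intCast, map_intCast, hconjω]
  push_cast
  ring

/-- Entries of a matrix all lie in `O₁₁`. -/
def EntriesIn (M : Matrix (Fin 3) (Fin 3) ℂ) : Prop := ∀ i j, M i j ∈ O11

lemma EntriesIn.mul {A B : Matrix (Fin 3) (Fin 3) ℂ}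
    (hA : EntriesIn A) (hB : EntriesIn B) : EntriesIn (A * B) := by
  intro i j
  rw [Matrix.mul_apply, Fin.sum_univ_three]
  exact O11.add (O11.add (O11.mul (hA _ _) (hB _ _)) (O11.mul (hA _ _) (hB _ _)))
    (O11.mul (hA _ _) (hB _ _))

lemma EntriesIn.one : EntriesIn 1 := by
  intro i j
  by_cases h : i = j
  · simp [Matrix.one_apply, h]; exact O11.one
  · simp [Matrix.one_apply, h]; exact O11.zero

lemma EntriesIn.conjTranspose {A : Matrix (Fin 3) (Fin 3) ℂ}
    (hA : EntriesIn A) : EntriesIn Aᴴ := fun i j => O11.star (hA j i)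

lemma EntriesIn.Jmat : EntriesIn Jmat := by
  intro i j
  fin_cases i <;> fin_cases j <;>
    simp [Jmat, Matrix.vecHead, Matrix.vecTail] <;>
    first
      | exact O11.one
      | exact O11.zero

/-- `M` preserves the Hermitian form. -/
def IsU (M : Matrix (Fin 3) (Fin 3) ℂ) : Prop := Mᴴ * Jmat * M = Jmat

lemma IsU.mul {A B : Matrix (Fin 3) (Fin 3) ℂ} (hA : IsU A) (hB : IsU B) :
    IsU (A * B) := by
  unfold IsU at *
  rw [Matrix.conjTranspose_mul]
  calc Bᴴ * Aᴴ * Jmat * (A * B) = Bᴴ * (Aᴴ * Jmat * A) * B := by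
        simp only [Matrix.mul_assoc]
  _ = Bᴴ * Jmat * B := by rw [hA]
  _ = Jmat := hB

lemma IsU.one : IsU 1 := by simp [IsU]

/-- `M` fixes the point `q∞`, i.e. the line through `(1,0,0)ᵗ`. -/
def FixesQInf (M : Matrix (Fin 3) (Fin 3) ℂ) : Prop :=
  ∃ c : ℂ, M.mulVec ![1,0,0] = c • ![1,0,0]

lemma FixesQInf.mul {A B : Matrix (Fin 3) (Fin 3) ℂ}
    (hA : FixesQInf A) (hB : FixesQInf B) : FixesQInf (A * B) := by
  obtain ⟨c, hc⟩ := hA; obtain ⟨e, he⟩ := hB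
  refine ⟨c * e, ?_⟩
  rw [← Matrix.mulVec_mulVec, he, Matrix.mulVec_smul, hc, smul_smul, mul_comm]

lemma FixesQInf.one : FixesQInf 1 := ⟨1, by simp⟩

/-- For `U ∈ GL(3,ℂ)` satisfying the unitarity condition, the matrix of `U⁻¹` is
`J Uᴴ J`. -/
lemma inv_coe_eq {U : GL (Fin 3) ℂ} (hU : IsU (U : Matrix (Fin 3) (Fin 3) ℂ)) :
    ((U⁻¹ : GL (Fin 3) ℂ) : Matrix (Fin 3) (Fin 3) ℂ)
      = Jmat * (U : Matrix (Fin 3) (Fin 3) ℂ)ᴴ * Jmat := by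
  have h : (Jmat * (U : Matrix (Fin 3) (Fin 3) ℂ)ᴴ * Jmat) * U = 1 := by
    calc (Jmat * (↑U)ᴴ * Jmat) * (U : Matrix (Fin 3) (Fin 3) ℂ)
        = Jmat * ((↑U)ᴴ * Jmat * ↑U) := by simp only [Matrix.mul_assoc]
    _ = 1 := by rw [hU, Jmat_mul_Jmat]
  exact Units.inv_eq_of_mul_eq_one_right (mul_eq_one_comm.mp h)

lemma IsU.inv {U : GL (Fin 3) ℂ} (hU : IsU (U : Matrix (Fin 3) (Fin 3) ℂ)) :
    IsU ((U⁻¹ : GL (Fin 3) ℂ) : Matrix (Fin 3) (Fin 3) ℂ) := by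
  rw [inv_coe_eq hU]
  unfold IsU at *
  set M : Matrix (Fin 3) (Fin 3) ℂ := (U : Matrix (Fin 3) (Fin 3) ℂ) with hM
  have h2 : M * (Jmat * Mᴴ * Jmat) = 1 := by
    apply mul_eq_one_comm.mp
    calc (Jmat * Mᴴ * Jmat) * M = Jmat * (Mᴴ * Jmat * M) := by
          simp only [Matrix.mul_assoc]
    _ = 1 := by rw [hU, Jmat_mul_Jmat]
  have h3 : M * Jmat * Mᴴ = Jmat := by
    calc M * Jmat * Mᴴ = M * Jmat * Mᴴ * (Jmat * Jmat) := by
          rw [Jmat_mul_Jmat, Matrix.mul_one]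
    _ = M * (Jmat * Mᴴ * Jmat) * Jmat := by simp only [Matrix.mul_assoc]
    _ = Jmat := by rw [h2, Matrix.one_mul]
  have hH : (Jmat * Mᴴ * Jmat)ᴴ = Jmat * M * Jmat := by
    rw [Matrix.conjTranspose_mul, Matrix.conjTranspose_mul, Jmat_conjTranspose,
      Matrix.conjTranspose_conjTranspose]
    simp only [Matrix.mul_assoc]
  rw [hH]
  calc Jmat * M * Jmat * Jmat * (Jmat * Mᴴ * Jmat)
      = Jmat * M * (Jmat * Jmat) * Jmat * Mᴴ * Jmat := by simp only [Matrix.mul_assoc]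
  _ = Jmat * M * Jmat * Mᴴ * Jmat := by rw [Jmat_mul_Jmat, Matrix.mul_one]
  _ = Jmat * (M * Jmat * Mᴴ) * Jmat := by simp only [Matrix.mul_assoc]
  _ = Jmat * Jmat * Jmat := by rw [h3]
  _ = Jmat := by rw [Jmat_mul_Jmat, Matrix.one_mul]

lemma EntriesIn.inv {U : GL (Fin 3) ℂ} (hU : IsU (U : Matrix (Fin 3) (Fin 3) ℂ))
    (hE : EntriesIn (U : Matrix (Fin 3) (Fin 3) ℂ)) :
    EntriesIn ((U⁻¹ : GL (Fin 3) ℂ) : Matrix (Fin 3) (Fin 3) ℂ) := by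
  rw [inv_coe_eq hU]
  exact (EntriesIn.Jmat.mul hE.conjTranspose).mul EntriesIn.Jmat

lemma FixesQInf.inv {U : GL (Fin 3) ℂ}
    (hF : FixesQInf (U : Matrix (Fin 3) (Fin 3) ℂ)) :
    FixesQInf ((U⁻¹ : GL (Fin 3) ℂ) : Matrix (Fin 3) (Fin 3) ℂ) := by
  obtain ⟨c, hc⟩ := hF
  have hUU : ((U⁻¹ : GL (Fin 3) ℂ) : Matrix (Fin 3) (Fin 3) ℂ) *
      (U : Matrix (Fin 3) (Fin 3) ℂ) = 1 := by
    rw [← Units.val_mul, inv_mul_cancel, Units.val_one]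
  have h1 : (![1,0,0] : Fin 3 → ℂ) =
      c • ((U⁻¹ : GL (Fin 3) ℂ) : Matrix (Fin 3) (Fin 3) ℂ).mulVec ![1,0,0] := by
    calc (![1,0,0] : Fin 3 → ℂ)
        = (((U⁻¹ : GL (Fin 3) ℂ) : Matrix (Fin 3) (Fin 3) ℂ) *
            (U : Matrix (Fin 3) (Fin 3) ℂ)).mulVec ![1,0,0] := by
          rw [hUU, Matrix.one_mulVec]
    _ = ((U⁻¹ : GL (Fin 3) ℂ) : Matrix (Fin 3) (Fin 3) ℂ).mulVec
          ((U : Matrix (Fin 3) (Fin 3) ℂ).mulVec ![1,0,0]) := by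
          rw [Matrix.mulVec_mulVec]
    _ = c • ((U⁻¹ : GL (Fin 3) ℂ) : Matrix (Fin 3) (Fin 3) ℂ).mulVec ![1,0,0] := by
          rw [hc, Matrix.mulVec_smul]
  have hc0 : c ≠ 0 := by
    intro h0
    rw [h0, zero_smul] at h1
    have := congrFun h1 0
    simp at this
  refine ⟨c⁻¹, ?_⟩
  conv_rhs => rw [h1]
  rw [smul_smul, inv_mul_cancel₀ hc0, one_smul]

/-- The stabiliser of `q∞` in `U(2,1;O₁₁)`, as a subgroup of `GL(3,ℂ)`. -/
def stab : Subgroup (GL (Fin 3) ℂ) where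
  carrier := {U | EntriesIn (U : Matrix (Fin 3) (Fin 3) ℂ) ∧
    IsU (U : Matrix (Fin 3) (Fin 3) ℂ) ∧ FixesQInf (U : Matrix (Fin 3) (Fin 3) ℂ)}
  mul_mem' := by
    rintro A B ⟨hAe, hAu, hAf⟩ ⟨hBe, hBu, hBf⟩
    exact ⟨by rw [Units.val_mul]; exact hAe.mul hBe,
      by rw [Units.val_mul]; exact hAu.mul hBu,
      by rw [Units.val_mul]; exact hAf.mul hBf⟩
  one_mem' := by
    refine ⟨?_, ?_, ?_⟩ <;> rw [Units.val_one]
    · exact EntriesIn.one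
    · exact IsU.one
    · exact FixesQInf.one
  inv_mem' := by
    rintro U ⟨hUe, hUu, hUf⟩
    exact ⟨hUe.inv hUu, hUu.inv, hUf.inv⟩

lemma negOne_mem : (-1 : GL (Fin 3) ℂ) ∈ stab := by
  refine ⟨?_, ?_, ?_⟩ <;> rw [Units.val_neg, Units.val_one]
  · intro i j
    by_cases h : i = j
    · simp [Matrix.one_apply, h]; exact O11.neg O11.one
    · simp [Matrix.one_apply, h]; exact O11.zero
  · simp [IsU]
  · exact ⟨-1, by simp [Matrix.neg_mulVec]⟩

/-- `−I` as an element of the stabiliser. -/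
def negOne : stab := ⟨-1, negOne_mem⟩

lemma negOne_central (g : stab) : g * negOne = negOne * g := by
  apply Subtype.ext
  show (g : GL (Fin 3) ℂ) * (-1) = (-1) * (g : GL (Fin 3) ℂ)
  rw [mul_neg_one, neg_one_mul]

instance zpowers_negOne_normal : (Subgroup.zpowers negOne).Normal := by
  constructor
  intro n hn g
  obtain ⟨k, rfl⟩ := hn
  have hcomm : Commute negOne g := negOne_central g |>.symm
  have : g * negOne ^ k * g⁻¹ = negOne ^ k := by
    rw [← (hcomm.zpow_left k).eq, mul_assoc, mul_inv_cancel, mul_one]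
  rw [this]
  exact Subgroup.zpow_mem _ (Subgroup.mem_zpowers negOne) k

def R₁ : Matrix (Fin 3) (Fin 3) ℂ := !![1,0,0; 0,-1,0; 0,0,1]
def R₂ : Matrix (Fin 3) (Fin 3) ℂ := !![1, 1, -((starRingEnd ℂ) ω); 0,-1,1; 0,0,1]
def R₃ : Matrix (Fin 3) (Fin 3) ℂ :=
  !![1, (starRingEnd ℂ) ω, -1 - (starRingEnd ℂ) ω; 0, -1, ω; 0,0,1]
def T : Matrix (Fin 3) (Fin 3) ℂ := !![1, 0, Complex.I*(√11:ℝ); 0,1,0; 0,0,1]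

lemma hR₁ : R₁ᴴ * Jmat * R₁ = Jmat := by
  ext i j
  fin_cases i <;> fin_cases j <;>
    simp [Matrix.mul_apply, Fin.sum_univ_three, Jmat, R₁, Matrix.conjTranspose_apply,
      Matrix.vecHead, Matrix.vecTail]

lemma hR₂ : R₂ᴴ * Jmat * R₂ = Jmat := by
  ext i j
  fin_cases i <;> fin_cases j <;>
    simp [Matrix.mul_apply, Fin.sum_univ_three, Jmat, R₂, ω, Matrix.conjTranspose_apply,
      Matrix.vecHead, Matrix.vecTail] <;>
    ring_nf <;>
    simp [Complex.ext_iff, ← Complex.ofReal_pow, Real.sq_sqrt] <;>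
    ring_nf

lemma hR₃ : R₃ᴴ * Jmat * R₃ = Jmat := by
  ext i j
  fin_cases i <;> fin_cases j <;>
    simp [Matrix.mul_apply, Fin.sum_univ_three, Jmat, R₃, ω, Matrix.conjTranspose_apply,
      Matrix.vecHead, Matrix.vecTail] <;>
    ring_nf <;>
    simp [Complex.ext_iff, ← Complex.ofReal_pow, Real.sq_sqrt] <;>
    ring_nf <;>
    simp

lemma hT : Tᴴ * Jmat * T = Jmat := by
  ext i j
  fin_cases i <;> fin_cases j <;>
    simp [Matrix.mul_apply, Fin.sum_univ_three, Jmat, T, Matrix.conjTranspose_apply,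
      Matrix.vecHead, Matrix.vecTail]

def toGL (M : Matrix (Fin 3) (Fin 3) ℂ) (h : Mᴴ * Jmat * M = Jmat) : GL (Fin 3) ℂ where
  val := M
  inv := Jmat * Mᴴ * Jmat
  inv_val := by
    calc (Jmat * Mᴴ * Jmat) * M = Jmat * (Mᴴ * Jmat * M) := by
          simp only [Matrix.mul_assoc]
    _ = 1 := by rw [h, Jmat_mul_Jmat]
  val_inv := by
    apply mul_eq_one_comm.mp
    calc (Jmat * Mᴴ * Jmat) * M = Jmat * (Mᴴ * Jmat * M) := by
          simp only [Matrix.mul_assoc]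
    _ = 1 := by rw [h, Jmat_mul_Jmat]

lemma R₁_entries : EntriesIn R₁ := by
  intro i j
  fin_cases i <;> fin_cases j
  · exact ⟨1, 0, by norm_num [R₁]⟩
  · exact ⟨0, 0, by norm_num [R₁]⟩
  · exact ⟨0, 0, by norm_num [R₁]⟩
  · exact ⟨0, 0, by norm_num [R₁, Matrix.vecHead, Matrix.vecTail]⟩
  · exact ⟨-1, 0, by norm_num [R₁, Matrix.vecHead, Matrix.vecTail]⟩
  · exact ⟨0, 0, by norm_num [R₁, Matrix.vecHead, Matrix.vecTail]⟩
  · exact ⟨0, 0, by norm_num [R₁, Matrix.vecHead, Matrix.vecTail]⟩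
  · exact ⟨0, 0, by norm_num [R₁, Matrix.vecHead, Matrix.vecTail]⟩
  · exact ⟨1, 0, by norm_num [R₁, Matrix.vecHead, Matrix.vecTail]⟩

lemma R₁_fix : FixesQInf R₁ :=
  ⟨1, by
    funext i
    fin_cases i <;>
      simp [R₁, Matrix.mulVec, dotProduct, Fin.sum_univ_three,
        Matrix.vecHead, Matrix.vecTail]⟩

lemma R₂_entries : EntriesIn R₂ := by
  intro i j
  fin_cases i <;> fin_cases j
  · exact ⟨1, 0, by norm_num [R₂]⟩
  · exact ⟨1, 0, by norm_num [R₂]⟩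
  · exact ⟨-1, 1, by simp [R₂, hconjω]; push_cast; ring⟩
  · exact ⟨0, 0, by norm_num [R₂, Matrix.vecHead, Matrix.vecTail]⟩
  · exact ⟨-1, 0, by norm_num [R₂, Matrix.vecHead, Matrix.vecTail]⟩
  · exact ⟨1, 0, by norm_num [R₂, Matrix.vecHead, Matrix.vecTail]⟩
  · exact ⟨0, 0, by norm_num [R₂, Matrix.vecHead, Matrix.vecTail]⟩
  · exact ⟨0, 0, by norm_num [R₂, Matrix.vecHead, Matrix.vecTail]⟩
  · exact ⟨1, 0, by norm_num [R₂, Matrix.vecHead, Matrix.vecTail]⟩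

lemma R₃_entries : EntriesIn R₃ := by
  intro i j
  fin_cases i <;> fin_cases j
  · exact ⟨1, 0, by norm_num [R₃]⟩
  · exact ⟨1, -1, by simp [R₃, hconjω]; push_cast; ring⟩
  · exact ⟨-2, 1, by simp [R₃, hconjω]; push_cast; ring⟩
  · exact ⟨0, 0, by norm_num [R₃, Matrix.vecHead, Matrix.vecTail]⟩
  · exact ⟨-1, 0, by norm_num [R₃, Matrix.vecHead, Matrix.vecTail]⟩
  · exact ⟨0, 1, by norm_num [R₃, Matrix.vecHead, Matrix.vecTail]⟩
  · exact ⟨0, 0, by norm_num [R₃, Matrix.vecHead, Matrix.vecTail]⟩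
  · exact ⟨0, 0, by norm_num [R₃, Matrix.vecHead, Matrix.vecTail]⟩
  · exact ⟨1, 0, by norm_num [R₃, Matrix.vecHead, Matrix.vecTail]⟩

lemma T_entries : EntriesIn T := by
  intro i j
  fin_cases i <;> fin_cases j
  · exact ⟨1, 0, by norm_num [T]⟩
  · exact ⟨0, 0, by norm_num [T]⟩
  · exact ⟨-1, 2, by simp [T, ω]; push_cast; ring⟩
  · exact ⟨0, 0, by norm_num [T, Matrix.vecHead, Matrix.vecTail]⟩
  · exact ⟨1, 0, by norm_num [T, Matrix.vecHead, Matrix.vecTail]⟩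
  · exact ⟨0, 0, by norm_num [T, Matrix.vecHead, Matrix.vecTail]⟩
  · exact ⟨0, 0, by norm_num [T, Matrix.vecHead, Matrix.vecTail]⟩
  · exact ⟨0, 0, by norm_num [T, Matrix.vecHead, Matrix.vecTail]⟩
  · exact ⟨1, 0, by norm_num [T, Matrix.vecHead, Matrix.vecTail]⟩

lemma R₂_fix : FixesQInf R₂ :=
  ⟨1, by
    funext i
    fin_cases i <;>
      simp [R₂, Matrix.mulVec, dotProduct, Fin.sum_univ_three,
        Matrix.vecHead, Matrix.vecTail]⟩

lemma R₃_fix : FixesQInf R₃ :=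
  ⟨1, by
    funext i
    fin_cases i <;>
      simp [R₃, Matrix.mulVec, dotProduct, Fin.sum_univ_three,
        Matrix.vecHead, Matrix.vecTail]⟩

lemma T_fix : FixesQInf T :=
  ⟨1, by
    funext i
    fin_cases i <;>
      simp [T, Matrix.mulVec, dotProduct, Fin.sum_univ_three,
        Matrix.vecHead, Matrix.vecTail]⟩

/-- `R₁`, `R₂`, `R₃`, `T` as elements of the stabiliser of `q∞`. -/
def R₁s : stab := ⟨toGL R₁ hR₁, R₁_entries, hR₁, R₁_fix⟩
def R₂s : stab := ⟨toGL R₂ hR₂, R₂_entries, hR₂, R₂_fix⟩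
def R₃s : stab := ⟨toGL R₃ hR₃, R₃_entries, hR₃, R₃_fix⟩
def Ts : stab := ⟨toGL T hT, T_entries, hT, T_fix⟩

/-- The relator set `{r₁², [t,r₁], t r₂⁻², t r₃⁻², t (r₁r₃r₂)⁻²}` of the
presentation, in the free group on the four generators `r₁, r₂, r₃, t`
(indexed `0, 1, 2, 3`). -/
def rels : Set (FreeGroup (Fin 4)) :=
  {(FreeGroup.of 0)^2,
   FreeGroup.of 3 * FreeGroup.of 0 * (FreeGroup.of 3)⁻¹ * (FreeGroup.of 0)⁻¹,
   FreeGroup.of 3 * ((FreeGroup.of 1)^2)⁻¹,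
   FreeGroup.of 3 * ((FreeGroup.of 2)^2)⁻¹,
   FreeGroup.of 3 * ((FreeGroup.of 0 * FreeGroup.of 2 * FreeGroup.of 1)^2)⁻¹}


/-! ### Auxiliary development -/

lemma hI11 : Complex.I * ((Real.sqrt 11 : ℝ) : ℂ) = 2 * ω - 1 := by
  rw [ω]; ring

lemma omega_im : ω.im = Real.sqrt 11 / 2 := by
  simp [ω, Complex.div_im, Complex.add_im, Complex.mul_im]

lemma omega_ne_real_aux (p q : ℤ) (h : (p:ℂ) + (q:ℂ) * ω = 0) : p = 0 ∧ q = 0 := by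
  have him : (q:ℝ) * (Real.sqrt 11 / 2) = 0 := by
    have := congrArg Complex.im h
    simpa [Complex.add_im, Complex.mul_im, omega_im] using this
  have hq : q = 0 := by
    have hpos : Real.sqrt 11 / 2 > 0 := by positivity
    rcases mul_eq_zero.mp him with h' | h'
    · exact_mod_cast h'
    · linarith
  subst hq
  refine ⟨?_, rfl⟩
  have hp : (p:ℂ) = 0 := by simpa using h
  exact_mod_cast hp

lemma normsq_int (p q : ℤ) :
    ((p:ℂ) + (q:ℂ) * ω) * (starRingEnd ℂ) ((p:ℂ) + (q:ℂ) * ω)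
      = ((p^2 + p*q + 3*q^2 : ℤ) : ℂ) := by
  rw [map_add, _root_.map_mul, map_intCast, map_intCast, hconjω]
  push_cast
  linear_combination (-(q:ℂ)^2) * hω

lemma int_norm_eq_one {p q : ℤ} (h : p^2 + p*q + 3*q^2 = 1) : q = 0 ∧ (p = 1 ∨ p = -1) := by
  have hq : q = 0 := by nlinarith [sq_nonneg (2*p+q), sq_nonneg q]
  subst hq
  have : p * p = 1 := by nlinarith
  rcases Int.eq_one_or_neg_one_of_mul_eq_one' this with ⟨h1,_⟩ | ⟨h1,_⟩ <;> simp [h1]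

/-- Units: if `x, y ∈ O₁₁` and `conj y * x = 1` then `x = y = ±1`. -/
lemma unit_lemma {x y : ℂ} (hx : x ∈ O11) (hy : y ∈ O11)
    (h : (starRingEnd ℂ) y * x = 1) : (x = 1 ∧ y = 1) ∨ (x = -1 ∧ y = -1) := by
  obtain ⟨p, q, rfl⟩ := hx
  obtain ⟨r, s, rfl⟩ := hy
  have h' : ((r:ℂ) + (s:ℂ) * ω) * (starRingEnd ℂ) ((p:ℂ) + (q:ℂ) * ω) = 1 := by
    have := congrArg (starRingEnd ℂ) h
    simpa [map_add, _root_.map_mul, mul_comm] using this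
  have hprod : (((p^2+p*q+3*q^2) * (r^2+r*s+3*s^2) : ℤ) : ℂ) = 1 := by
    rw [Int.cast_mul, normsq_int p q |>.symm, normsq_int r s |>.symm]
    linear_combination ((starRingEnd ℂ) ((p:ℂ) + (q:ℂ)*ω) * ((r:ℂ)+(s:ℂ)*ω)) * h
      + h'
  have hz : (p^2+p*q+3*q^2) * (r^2+r*s+3*s^2) = 1 := by exact_mod_cast hprod
  rcases Int.eq_one_or_neg_one_of_mul_eq_one' hz with ⟨h1, h2⟩ | ⟨h1, h2⟩
  · obtain ⟨hq, hp⟩ := int_norm_eq_one h1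
    obtain ⟨hs, hr⟩ := int_norm_eq_one h2
    subst hq; subst hs
    have hxp : ((p:ℂ) + ((0:ℤ):ℂ) * ω) = (p:ℂ) := by push_cast; ring
    have hyr : ((r:ℂ) + ((0:ℤ):ℂ) * ω) = (r:ℂ) := by push_cast; ring
    rw [hxp, hyr] at h ⊢
    rw [map_intCast] at h
    rcases hp with hp | hp <;> rcases hr with hr | hr <;> subst hp <;> subst hr <;>
      norm_num at h <;> norm_num
  · exfalso; nlinarith [sq_nonneg (2*p+q), sq_nonneg q, sq_nonneg (2*r+s), sq_nonneg s]

/-- Purely imaginary elements of `O₁₁` are integer multiples of `2ω - 1 = i√11`. -/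
lemma imaginary_O11 {b : ℂ} (hb : b ∈ O11) (h : b + (starRingEnd ℂ) b = 0) :
    ∃ k : ℤ, b = (k:ℂ) * (2*ω - 1) := by
  obtain ⟨p, q, rfl⟩ := hb
  have h2 : ((2*p+q : ℤ):ℂ) = 0 := by
    rw [map_add, _root_.map_mul, map_intCast, map_intCast, hconjω] at h
    push_cast
    linear_combination h
  have h3 : 2*p + q = 0 := by exact_mod_cast h2
  refine ⟨-p, ?_⟩
  have hq : q = -2*p := by omega
  subst hq
  push_cast
  ring

/-- The basic upper-triangular matrix shape. -/
def quad (e a b d : ℂ) : Matrix (Fin 3) (Fin 3) ℂ := !![1,a,b; 0,e,d; 0,0,1]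

lemma quad_mul (e a b d e' a' b' d' : ℂ) :
    quad e a b d * quad e' a' b' d'
      = quad (e*e') (a*e' + a') (b + a*d' + b') (e*d' + d) := by
  ext i j
  fin_cases i <;> fin_cases j <;>
    simp [quad, Matrix.mul_apply, Fin.sum_univ_three, Matrix.vecHead, Matrix.vecTail] <;> ring

lemma quad_one : quad 1 0 0 0 = 1 := by
  ext i j
  fin_cases i <;> fin_cases j <;>
    simp [quad, Matrix.one_fin_three, Matrix.vecHead, Matrix.vecTail]

lemma quad_inv_sandwich (e a b d : ℂ) :
    Jmat * (quad e a b d)ᴴ * Jmat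
      = quad ((starRingEnd ℂ) e) ((starRingEnd ℂ) d) ((starRingEnd ℂ) b) ((starRingEnd ℂ) a) := by
  ext i j
  fin_cases i <;> fin_cases j <;>
    simp [quad, Jmat, Matrix.mul_apply, Fin.sum_univ_three, Matrix.conjTranspose_apply,
      Matrix.vecHead, Matrix.vecTail, -Matrix.cons_mul]

lemma quad_ext {e a b d e' a' b' d' : ℂ} (he : e = e') (ha : a = a') (hb : b = b')
    (hd : d = d') : quad e a b d = quad e' a' b' d' := by
  rw [he, ha, hb, hd]

lemma R₁_quad : R₁ = quad (-1) 0 0 0 := by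
  ext i j
  fin_cases i <;> fin_cases j <;> simp [R₁, quad]

lemma R₂_quad : R₂ = quad (-1) 1 (ω - 1) 1 := by
  ext i j
  fin_cases i <;> fin_cases j <;>
    simp [R₂, quad, hconjω, Matrix.vecHead, Matrix.vecTail] <;> ring

lemma R₃_quad : R₃ = quad (-1) (1 - ω) (ω - 2) ω := by
  ext i j
  fin_cases i <;> fin_cases j <;>
    simp [R₃, quad, hconjω, Matrix.vecHead, Matrix.vecTail] <;> ring

lemma T_quad : T = quad 1 0 (2*ω - 1) 0 := by
  ext i j
  fin_cases i <;> fin_cases j <;>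
    simp [T, quad, hI11, Matrix.vecHead, Matrix.vecTail]

/-- The matrix of an element of the stabiliser. -/
def mm (U : stab) : Matrix (Fin 3) (Fin 3) ℂ := ((U : GL (Fin 3) ℂ) : Matrix (Fin 3) (Fin 3) ℂ)

lemma mm_mul (U V : stab) : mm (U * V) = mm U * mm V := rfl

lemma mm_one : mm 1 = 1 := rfl

lemma mm_inv (U : stab) : mm U⁻¹ = Jmat * (mm U)ᴴ * Jmat := by
  have := inv_coe_eq (U := (U : GL (Fin 3) ℂ)) U.2.2.1
  simpa [mm] using this

lemma mm_injective : Function.Injective mm := by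
  intro U V h
  exact Subtype.ext (Units.ext h)

lemma mm_entries (U : stab) : EntriesIn (mm U) := U.2.1
lemma mm_isU (U : stab) : IsU (mm U) := U.2.2.1

lemma mm_negOne : mm negOne = -1 := by
  simp [mm, negOne]

lemma mm_R₁s : mm R₁s = quad (-1) 0 0 0 := R₁_quad
lemma mm_R₂s : mm R₂s = quad (-1) 1 (ω - 1) 1 := R₂_quad
lemma mm_R₃s : mm R₃s = quad (-1) (1 - ω) (ω - 2) ω := R₃_quad
lemma mm_Ts : mm Ts = quad 1 0 (2*ω - 1) 0 := T_quad

/-! ### The generators `X = R₁R₂`, `Y = R₁R₃` and relations in the stabiliser -/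

def Xs : stab := R₁s * R₂s
def Ys : stab := R₁s * R₃s

lemma mm_Xs : mm Xs = quad 1 1 (ω - 1) (-1) := by
  rw [Xs, mm_mul, mm_R₁s, mm_R₂s, quad_mul]
  exact quad_ext (by ring) (by ring) (by ring) (by ring)

lemma mm_Ys : mm Ys = quad 1 (1 - ω) (ω - 2) (-ω) := by
  rw [Ys, mm_mul, mm_R₁s, mm_R₃s, quad_mul]
  exact quad_ext (by ring) (by ring) (by ring) (by ring)

lemma sR1 : R₁s * R₁s = 1 := by
  apply mm_injective
  rw [mm_mul, mm_R₁s, quad_mul, mm_one, ← quad_one]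
  exact quad_ext (by ring) (by ring) (by ring) (by ring)

lemma sTR1 : Ts * R₁s = R₁s * Ts := by
  apply mm_injective
  rw [mm_mul, mm_mul, mm_R₁s, mm_Ts, quad_mul, quad_mul]
  exact quad_ext (by ring) (by ring) (by ring) (by ring)

lemma sR2 : R₂s * R₂s = Ts := by
  apply mm_injective
  rw [mm_mul, mm_R₂s, quad_mul, mm_Ts]
  exact quad_ext (by ring) (by ring) (by ring) (by ring)

lemma sR3 : R₃s * R₃s = Ts := by
  apply mm_injective
  rw [mm_mul, mm_R₃s, quad_mul, mm_Ts]
  exact quad_ext (by ring) (by ring) (by linear_combination -hω) (by ring)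

lemma mm_G : mm (R₁s * R₃s * R₂s) = quad (-1) ω (ω - 2) (1 - ω) := by
  rw [mm_mul, mm_mul, mm_R₁s, mm_R₃s, mm_R₂s, quad_mul, quad_mul]
  exact quad_ext (by ring) (by ring) (by ring) (by ring)

lemma sG : (R₁s * R₃s * R₂s) * (R₁s * R₃s * R₂s) = Ts := by
  apply mm_injective
  rw [mm_mul, mm_G, quad_mul, mm_Ts]
  exact quad_ext (by ring) (by ring) (by linear_combination -hω) (by ring)

/-! ### The homomorphism from the presented group -/

def gens : Fin 4 → stab := ![R₁s, R₂s, R₃s, Ts]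

lemma hrels : ∀ r ∈ rels, FreeGroup.lift gens r = 1 := by
  have g0 : FreeGroup.lift gens (FreeGroup.of 0) = R₁s := by simp [gens]
  have g1 : FreeGroup.lift gens (FreeGroup.of 1) = R₂s := by simp [gens]
  have g2 : FreeGroup.lift gens (FreeGroup.of 2) = R₃s := by simp [gens]
  have g3 : FreeGroup.lift gens (FreeGroup.of 3) = Ts := by simp [gens]
  intro r hr
  simp only [rels, Set.mem_insert_iff, Set.mem_singleton_iff] at hr
  rcases hr with rfl | rfl | rfl | rfl | rfl
  · rw [map_pow, g0, pow_two]; exact sR1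
  · rw [_root_.map_mul, _root_.map_mul, _root_.map_mul, map_inv, map_inv, g0, g3,
      mul_inv_eq_one, mul_inv_eq_iff_eq_mul]
    exact sTR1
  · rw [_root_.map_mul, map_inv, map_pow, g1, g3, mul_inv_eq_one, pow_two]
    exact sR2.symm
  · rw [_root_.map_mul, map_inv, map_pow, g2, g3, mul_inv_eq_one, pow_two]
    exact sR3.symm
  · rw [_root_.map_mul, map_inv, map_pow, _root_.map_mul, _root_.map_mul, g0, g2, g1, g3,
      mul_inv_eq_one, pow_two]
    exact sG.symm

def fhom : PresentedGroup rels →* stab := PresentedGroup.toGroup hrels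

lemma fhom_of (i : Fin 4) : fhom (PresentedGroup.of i) = gens i :=
  PresentedGroup.toGroup.of hrels

lemma fhom_of0 : fhom (PresentedGroup.of 0) = R₁s := fhom_of 0
lemma fhom_of1 : fhom (PresentedGroup.of 1) = R₂s := fhom_of 1
lemma fhom_of2 : fhom (PresentedGroup.of 2) = R₃s := fhom_of 2
lemma fhom_of3 : fhom (PresentedGroup.of 3) = Ts := fhom_of 3

/-! ### Entry lemmas for elements of the stabiliser -/

lemma isU_entry {M : Matrix (Fin 3) (Fin 3) ℂ} (hU : IsU M) (i j : Fin 3) :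
    (starRingEnd ℂ) (M 0 i) * M 2 j + (starRingEnd ℂ) (M 1 i) * M 1 j
      + (starRingEnd ℂ) (M 2 i) * M 0 j = Jmat i j := by
  have h := congrFun (congrFun hU i) j
  rw [← h]
  simp [Matrix.mul_apply, Fin.sum_univ_three, Matrix.conjTranspose_apply, Jmat,
    Matrix.vecHead, Matrix.vecTail, -Matrix.cons_mul]
  ring

lemma stab_col (U : stab) : mm U 1 0 = 0 ∧ mm U 2 0 = 0 := by
  obtain ⟨c, hc⟩ := U.2.2.2
  have h1 := congrFun hc 1
  have h2 := congrFun hc 2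
  simp [Matrix.mulVec, dotProduct, Fin.sum_univ_three,
    Matrix.vecHead, Matrix.vecTail, mm] at h1 h2
  exact ⟨h1, h2⟩

/-! ### Matrices of powers -/

lemma mm_Xs_inv : mm Xs⁻¹ = quad 1 (-1) (-ω) 1 := by
  rw [mm_inv, mm_Xs, quad_inv_sandwich]
  exact quad_ext (by simp) (by simp) (by rw [map_sub, hconjω, _root_.map_one]; ring) (by simp)

lemma mm_Ys_inv : mm Ys⁻¹ = quad 1 (ω - 1) (-1 - ω) ω := by
  rw [mm_inv, mm_Ys, quad_inv_sandwich]
  refine quad_ext (by simp) ?_ ?_ ?_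
  · rw [map_neg, hconjω]; ring
  · rw [map_sub, hconjω, map_ofNat]; ring
  · rw [map_sub, hconjω, _root_.map_one]; ring

lemma mm_Ts_inv : mm Ts⁻¹ = quad 1 0 (1 - 2*ω) 0 := by
  rw [mm_inv, mm_Ts, quad_inv_sandwich]
  refine quad_ext (by simp) (by simp) ?_ (by simp)
  rw [map_sub, _root_.map_mul, hconjω, _root_.map_one, map_ofNat]
  ring

lemma mm_Ts_zpow (k : ℤ) : mm (Ts ^ k) = quad 1 0 ((k:ℂ) * (2*ω-1)) 0 := by
  induction k using Int.induction_on with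
  | zero =>
    rw [zpow_zero, mm_one, ← quad_one]
    exact quad_ext rfl rfl (by push_cast; ring) rfl
  | succ n ih =>
    rw [_root_.zpow_add_one, mm_mul, ih, mm_Ts, quad_mul]
    exact quad_ext (by ring) (by ring) (by push_cast; ring) (by ring)
  | pred n ih =>
    rw [_root_.zpow_sub_one, mm_mul, ih, mm_Ts_inv, quad_mul]
    exact quad_ext (by ring) (by ring) (by push_cast; ring) (by ring)

lemma mm_Xs_zpow (m : ℤ) :
    mm (Xs ^ m) = quad 1 (m:ℂ) ((m:ℂ)*(ω-1) - (m:ℂ)*((m:ℂ)-1)/2) (-(m:ℂ)) := by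
  induction m using Int.induction_on with
  | zero =>
    rw [zpow_zero, mm_one, ← quad_one]
    exact quad_ext rfl (by push_cast; ring) (by push_cast; ring) (by push_cast; ring)
  | succ n ih =>
    rw [_root_.zpow_add_one, mm_mul, ih, mm_Xs, quad_mul]
    exact quad_ext (by ring) (by push_cast; ring) (by push_cast; ring) (by push_cast; ring)
  | pred n ih =>
    rw [_root_.zpow_sub_one, mm_mul, ih, mm_Xs_inv, quad_mul]
    exact quad_ext (by ring) (by push_cast; ring) (by push_cast; ring) (by push_cast; ring)

lemma mm_Ys_zpow (n : ℤ) :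
    mm (Ys ^ n) = quad 1 ((n:ℂ)*(1-ω)) ((n:ℂ)*(ω-2) - 3*((n:ℂ)*((n:ℂ)-1)/2)) (-(n:ℂ)*ω) := by
  induction n using Int.induction_on with
  | zero =>
    rw [zpow_zero, mm_one, ← quad_one]
    exact quad_ext rfl (by push_cast; ring) (by push_cast; ring) (by push_cast; ring)
  | succ n ih =>
    rw [_root_.zpow_add_one, mm_mul, ih, mm_Ys, quad_mul]
    refine quad_ext (by ring) (by push_cast; ring) ?_ (by push_cast; ring)
    push_cast
    linear_combination (n:ℂ) * hω
  | pred n ih =>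
    rw [_root_.zpow_sub_one, mm_mul, ih, mm_Ys_inv, quad_mul]
    refine quad_ext (by ring) (by push_cast; ring) ?_ (by push_cast; ring)
    push_cast
    linear_combination (n:ℂ) * hω

/-! ### The subgroup `{±1}` and the subgroup of matrices with top-left entry 1 -/

lemma negOne_sq : negOne * negOne = 1 := by
  apply mm_injective
  rw [mm_mul, mm_negOne, mm_one, neg_one_mul, neg_neg]

lemma mem_zpowers_negOne {g : stab} (h : g ∈ Subgroup.zpowers negOne) :
    g = 1 ∨ g = negOne := by
  obtain ⟨k, rfl⟩ := h
  have h2 : negOne ^ (2:ℤ) = 1 := by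
    rw [zpow_two]; exact negOne_sq
  rcases Int.even_or_odd k with ⟨j, hj⟩ | ⟨j, hj⟩
  · left
    subst hj
    show negOne ^ (j + j) = 1
    rw [show j + j = 2*j by ring, _root_.zpow_mul negOne 2 j, h2, _root_.one_zpow]
  · right
    subst hj
    show negOne ^ (2*j + 1) = negOne
    rw [_root_.zpow_add_one, _root_.zpow_mul negOne 2 j, h2, _root_.one_zpow, one_mul]

lemma stab_corner (U : stab) : (starRingEnd ℂ) (mm U 2 2) * mm U 0 0 = 1 := by
  have h := isU_entry (mm_isU U) 2 0
  obtain ⟨h1, h2⟩ := stab_col U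
  rw [h1, h2] at h
  simpa [Jmat] using h

def S0 : Subgroup stab where
  carrier := {U | mm U 0 0 = 1}
  one_mem' := by
    show mm 1 0 0 = 1
    rw [mm_one]
    simp [Matrix.one_apply]
  mul_mem' := by
    intro A B hA hB
    simp only [Set.mem_setOf_eq] at hA hB ⊢
    rw [mm_mul]
    obtain ⟨h1, h2⟩ := stab_col B
    simp [Matrix.mul_apply, Fin.sum_univ_three, h1, h2, hA, hB]
  inv_mem' := by
    intro U hU
    simp only [Set.mem_setOf_eq] at hU ⊢
    have h := stab_corner U
    rw [hU, mul_one] at h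
    have h22 : mm U 2 2 = 1 := by
      have := congrArg (starRingEnd ℂ) h
      simpa using this
    rw [mm_inv]
    simp [Matrix.mul_apply, Fin.sum_univ_three, Jmat, Matrix.conjTranspose_apply,
      -Matrix.cons_mul, h22]

lemma gens_mem_S0 (i : Fin 4) : gens i ∈ S0 := by
  fin_cases i
  · show mm R₁s 0 0 = 1; rw [mm_R₁s]; simp [quad]
  · show mm R₂s 0 0 = 1; rw [mm_R₂s]; simp [quad]
  · show mm R₃s 0 0 = 1; rw [mm_R₃s]; simp [quad]
  · show mm Ts 0 0 = 1; rw [mm_Ts]; simp [quad]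

lemma lift_gens_mem_S0 (v : FreeGroup (Fin 4)) : FreeGroup.lift gens v ∈ S0 := by
  induction v using FreeGroup.induction_on with
  | C1 => rw [_root_.map_one]; exact S0.one_mem
  | of x =>
    have : FreeGroup.lift gens (FreeGroup.of x) = gens x := FreeGroup.lift_apply_of
    rw [this]
    exact gens_mem_S0 x
  | inv_of x ih =>
    rw [map_inv]
    exact S0.inv_mem ih
  | mul x y ihx ihy =>
    rw [_root_.map_mul]
    exact S0.mul_mem ihx ihy

lemma fhom_mem_S0 (p : PresentedGroup rels) : fhom p ∈ S0 := by
  refine QuotientGroup.induction_on p ?_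
  intro w
  have : fhom (QuotientGroup.mk w) = FreeGroup.lift gens w := rfl
  rw [this]
  exact lift_gens_mem_S0 w

/-! ### Classification of stabiliser elements and surjectivity -/

lemma eq_quad_of_entries {M : Matrix (Fin 3) (Fin 3) ℂ} {e a b d : ℂ}
    (h00 : M 0 0 = 1) (h01 : M 0 1 = a) (h02 : M 0 2 = b) (h10 : M 1 0 = 0)
    (h11 : M 1 1 = e) (h12 : M 1 2 = d) (h20 : M 2 0 = 0) (h21 : M 2 1 = 0)
    (h22 : M 2 2 = 1) : M = quad e a b d := by
  ext i j
  fin_cases i <;> fin_cases j <;>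
    simp [quad, h00, h01, h02, h10, h11, h12, h20, h21, h22,
      Matrix.vecHead, Matrix.vecTail]

lemma classify_normalized (W : stab) (h00 : mm W 0 0 = 1) :
    ∃ e a b, (e = 1 ∨ e = -1) ∧ mm W = quad e a b (-(e * (starRingEnd ℂ) a)) := by
  obtain ⟨h10, h20⟩ := stab_col W
  have h22 : mm W 2 2 = 1 := by
    have h := stab_corner W
    rw [h00, mul_one] at h
    have := congrArg (starRingEnd ℂ) h
    simpa using this
  have h21 : mm W 2 1 = 0 := by
    have h := isU_entry (mm_isU W) 1 0
    rw [h10, h20, h00] at h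
    simp [Jmat] at h
    have := congrArg (starRingEnd ℂ) h
    simpa using this
  have he : (starRingEnd ℂ) (mm W 1 1) * (mm W 1 1) = 1 := by
    have h := isU_entry (mm_isU W) 1 1
    rw [h21] at h
    simpa [Jmat] using h
  have he2 := unit_lemma (mm_entries W 1 1) (mm_entries W 1 1) he
  have hd : (starRingEnd ℂ) (mm W 1 2) * (mm W 1 1) + mm W 0 1 = 0 := by
    have h := isU_entry (mm_isU W) 2 1
    rw [h21, h22] at h
    simpa [Jmat] using h
  refine ⟨mm W 1 1, mm W 0 1, mm W 0 2, ?_, ?_⟩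
  · rcases he2 with ⟨h, _⟩ | ⟨h, _⟩
    · exact Or.inl h
    · exact Or.inr h
  · refine eq_quad_of_entries h00 rfl rfl h10 rfl ?_ h20 h21 h22
    rcases he2 with ⟨h, _⟩ | ⟨h, _⟩ <;> rw [h] at hd ⊢
    · have h1 : (starRingEnd ℂ) (mm W 1 2) = -(mm W 0 1) := by linear_combination hd
      have h2 := congrArg (starRingEnd ℂ) h1
      rw [Complex.conj_conj, map_neg] at h2
      rw [h2]; ring
    · have h1 : (starRingEnd ℂ) (mm W 1 2) = mm W 0 1 := by linear_combination -hd
      have h2 := congrArg (starRingEnd ℂ) h1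
      rw [Complex.conj_conj] at h2
      rw [h2]; ring

lemma classify (V : stab) :
    ∃ W : stab, (W = V ∨ W = negOne * V) ∧ ∃ e a b, (e = 1 ∨ e = -1) ∧
      mm W = quad e a b (-(e * (starRingEnd ℂ) a)) := by
  have hc := unit_lemma (mm_entries V 0 0) (mm_entries V 2 2) (stab_corner V)
  rcases hc with ⟨h00, _⟩ | ⟨h00, _⟩
  · exact ⟨V, Or.inl rfl, classify_normalized V h00⟩
  · refine ⟨negOne * V, Or.inr rfl, classify_normalized _ ?_⟩
    rw [mm_mul, mm_negOne, neg_one_mul, Matrix.neg_apply, h00, neg_neg]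

lemma R1s_mem : R₁s ∈ fhom.range := ⟨PresentedGroup.of 0, fhom_of0⟩
lemma Ts_mem : Ts ∈ fhom.range := ⟨PresentedGroup.of 3, fhom_of3⟩
lemma Xs_mem : Xs ∈ fhom.range := by
  refine ⟨PresentedGroup.of 0 * PresentedGroup.of 1, ?_⟩
  rw [_root_.map_mul, fhom_of0, fhom_of1]; rfl
lemma Ys_mem : Ys ∈ fhom.range := by
  refine ⟨PresentedGroup.of 0 * PresentedGroup.of 2, ?_⟩
  rw [_root_.map_mul, fhom_of0, fhom_of2]; rfl

/-- The set of `a ∈ ℂ` realised as the `(0,1)` entry of a normalised element of the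
range of `fhom`, as an additive subgroup. -/
def Arange : AddSubgroup ℂ where
  carrier := {a | ∃ W : stab, W ∈ fhom.range ∧ ∃ b, mm W = quad 1 a b (-((starRingEnd ℂ) a))}
  zero_mem' := by
    refine ⟨1, one_mem _, 0, ?_⟩
    rw [mm_one, ← quad_one]
    exact quad_ext rfl rfl rfl (by simp)
  add_mem' := by
    rintro a a' ⟨W, hW, b, hWm⟩ ⟨W', hW', b', hWm'⟩
    refine ⟨W * W', mul_mem hW hW', b + a * (-((starRingEnd ℂ) a')) + b', ?_⟩
    rw [mm_mul, hWm, hWm', quad_mul]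
    exact quad_ext (by ring) (by ring) (by ring) (by rw [map_add]; ring)
  neg_mem' := by
    rintro a ⟨W, hW, b, hWm⟩
    refine ⟨W⁻¹, inv_mem hW, (starRingEnd ℂ) b, ?_⟩
    rw [mm_inv, hWm, quad_inv_sandwich]
    exact quad_ext (by simp) (by simp) rfl (by simp)

lemma one_mem_Arange : (1:ℂ) ∈ Arange := by
  refine ⟨Xs, Xs_mem, ω - 1, ?_⟩
  rw [mm_Xs]
  exact quad_ext rfl rfl rfl (by simp)

lemma one_sub_omega_mem_Arange : (1 - ω) ∈ Arange := by
  refine ⟨Ys, Ys_mem, ω - 2, ?_⟩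
  rw [mm_Ys]
  refine quad_ext rfl rfl rfl ?_
  rw [map_sub, hconjω, _root_.map_one]
  ring

lemma O11_mem_Arange {a : ℂ} (ha : a ∈ O11) : a ∈ Arange := by
  obtain ⟨p, q, rfl⟩ := ha
  have h2 : (p:ℂ) + (q:ℂ)*ω = (p+q) • (1:ℂ) + (-q) • (1-ω) := by
    rw [zsmul_eq_mul, zsmul_eq_mul]
    push_cast
    ring
  rw [h2]
  exact add_mem (AddSubgroup.zsmul_mem _ one_mem_Arange _)
    (AddSubgroup.zsmul_mem _ one_sub_omega_mem_Arange _)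

lemma norm1_in_range (W : stab) (a b : ℂ)
    (hm : mm W = quad 1 a b (-((starRingEnd ℂ) a))) : W ∈ fhom.range := by
  have haO : a ∈ O11 := by
    have h := mm_entries W 0 1
    rw [hm] at h
    simpa [quad] using h
  obtain ⟨Z, hZ, bz, hZm⟩ := O11_mem_Arange haO
  set b'' := (starRingEnd ℂ) bz + a * (starRingEnd ℂ) a + b with hbdef
  have hprod : mm (Z⁻¹ * W) = quad 1 0 b'' 0 := by
    rw [mm_mul, mm_inv, hZm, quad_inv_sandwich, hm, quad_mul]
    refine quad_ext (by simp) (by simp) ?_ (by simp)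
    rw [hbdef, map_neg, Complex.conj_conj]
    ring
  have hbO : b'' ∈ O11 := by
    have h := mm_entries (Z⁻¹ * W) 0 2
    rw [hprod] at h
    simpa [quad] using h
  have him : b'' + (starRingEnd ℂ) b'' = 0 := by
    have h := isU_entry (mm_isU (Z⁻¹ * W)) 2 2
    rw [hprod] at h
    simp [quad, Jmat, Matrix.vecHead, Matrix.vecTail] at h
    linear_combination h
  obtain ⟨k, hk⟩ := imaginary_O11 hbO him
  have hZW : Z⁻¹ * W = Ts ^ k := by
    apply mm_injective
    rw [hprod, mm_Ts_zpow]
    exact quad_ext rfl rfl (by rw [hk]) rfl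
  have hW : W = Z * Ts ^ k := by
    rw [← hZW]
    group
  rw [hW]
  exact mul_mem hZ (zpow_mem Ts_mem k)

lemma norm_in_range (W : stab) (e a b : ℂ) (he : e = 1 ∨ e = -1)
    (hm : mm W = quad e a b (-(e * (starRingEnd ℂ) a))) : W ∈ fhom.range := by
  rcases he with rfl | rfl
  · exact norm1_in_range W a b (by rw [hm]; exact quad_ext rfl rfl rfl (by ring))
  · have h1 : mm (R₁s * W) = quad 1 a b (-((starRingEnd ℂ) a)) := by
      rw [mm_mul, mm_R₁s, hm, quad_mul]
      exact quad_ext (by ring) (by ring) (by ring) (by ring)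
    have h2 := norm1_in_range _ a b h1
    have h3 : W = R₁s⁻¹ * (R₁s * W) := by group
    rw [h3]
    exact mul_mem (inv_mem R1s_mem) h2

/-! ### Relations inside the presented group -/

def pr1 : PresentedGroup rels := PresentedGroup.of 0
def pr2 : PresentedGroup rels := PresentedGroup.of 1
def pr3 : PresentedGroup rels := PresentedGroup.of 2
def prt : PresentedGroup rels := PresentedGroup.of 3
def px : PresentedGroup rels := pr1 * pr2
def py : PresentedGroup rels := pr1 * pr3

lemma rel_mk (w : FreeGroup (Fin 4)) (hw : w ∈ rels) :
    (PresentedGroup.mk rels) w = 1 := by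
  show (QuotientGroup.mk w : PresentedGroup rels) = 1
  rw [QuotientGroup.eq_one_iff]
  exact Subgroup.subset_normalClosure hw

lemma mk_of (i : Fin 4) : (PresentedGroup.mk rels) (FreeGroup.of i) = PresentedGroup.of i := rfl

lemma L1 : pr1 * pr1 = 1 := by
  have h := rel_mk ((FreeGroup.of 0)^2) (by simp [rels])
  rw [map_pow, mk_of, pow_two] at h
  exact h

lemma L1' : pr1⁻¹ = pr1 := by
  exact inv_eq_of_mul_eq_one_right L1

lemma Lt1 : prt * pr1 = pr1 * prt := by
  have h := rel_mk (FreeGroup.of 3 * FreeGroup.of 0 * (FreeGroup.of 3)⁻¹ * (FreeGroup.of 0)⁻¹)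
    (by simp [rels])
  rw [_root_.map_mul, _root_.map_mul, _root_.map_mul, map_inv, map_inv, mk_of, mk_of] at h
  rw [mul_inv_eq_one, mul_inv_eq_iff_eq_mul] at h
  exact h

lemma Lt2 : prt = pr2 * pr2 := by
  have h := rel_mk (FreeGroup.of 3 * ((FreeGroup.of 1)^2)⁻¹) (by simp [rels])
  rw [_root_.map_mul, map_inv, map_pow, mk_of, mk_of, mul_inv_eq_one, pow_two] at h
  exact h

lemma Lt3 : prt = pr3 * pr3 := by
  have h := rel_mk (FreeGroup.of 3 * ((FreeGroup.of 2)^2)⁻¹) (by simp [rels])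
  rw [_root_.map_mul, map_inv, map_pow, mk_of, mk_of, mul_inv_eq_one, pow_two] at h
  exact h

lemma Lt5 : prt = (pr1 * pr3 * pr2) * (pr1 * pr3 * pr2) := by
  have h := rel_mk (FreeGroup.of 3 * ((FreeGroup.of 0 * FreeGroup.of 2 * FreeGroup.of 1)^2)⁻¹)
    (by simp [rels])
  rw [_root_.map_mul, map_inv, map_pow, _root_.map_mul, _root_.map_mul, mk_of, mk_of, mk_of,
    mk_of, mul_inv_eq_one, pow_two] at h
  exact h

lemma ct1 : Commute prt pr1 := Lt1
lemma ct2 : Commute prt pr2 := by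
  rw [Commute, SemiconjBy, Lt2]
  group
lemma ct3 : Commute prt pr3 := by
  rw [Commute, SemiconjBy, Lt3]
  group
lemma ctx : Commute prt px := ct1.mul_right ct2
lemma cty : Commute prt py := ct1.mul_right ct3

lemma D1 : pr1 * px * pr1 = px⁻¹ * prt := by
  have h2 : pr2⁻¹ * prt = pr2 := by rw [Lt2]; group
  calc pr1 * px * pr1 = pr1 * pr1 * pr2 * pr1 := by rw [px]; group
  _ = pr2 * pr1 := by rw [L1]; group
  _ = (pr2⁻¹ * prt) * pr1 := by rw [h2]
  _ = pr2⁻¹ * (prt * pr1) := by group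
  _ = pr2⁻¹ * (pr1 * prt) := by rw [Lt1]
  _ = (pr2⁻¹ * pr1⁻¹) * prt := by rw [L1']; group
  _ = px⁻¹ * prt := by rw [px, _root_.mul_inv_rev]

lemma D2 : pr1 * py * pr1 = py⁻¹ * prt := by
  have h2 : pr3⁻¹ * prt = pr3 := by rw [Lt3]; group
  calc pr1 * py * pr1 = pr1 * pr1 * pr3 * pr1 := by rw [py]; group
  _ = pr3 * pr1 := by rw [L1]; group
  _ = (pr3⁻¹ * prt) * pr1 := by rw [h2]
  _ = pr3⁻¹ * (prt * pr1) := by group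
  _ = pr3⁻¹ * (pr1 * prt) := by rw [Lt1]
  _ = (pr3⁻¹ * pr1⁻¹) * prt := by rw [L1']; group
  _ = py⁻¹ * prt := by rw [py, _root_.mul_inv_rev]

lemma D1inv : pr1 * px⁻¹ * pr1 = px * prt⁻¹ := by
  calc pr1 * px⁻¹ * pr1 = pr1⁻¹ * px⁻¹ * pr1⁻¹ := by rw [L1']
  _ = (pr1 * px * pr1)⁻¹ := by group
  _ = (px⁻¹ * prt)⁻¹ := by rw [D1]
  _ = prt⁻¹ * px := by group
  _ = px * prt⁻¹ := by rw [ctx.inv_left.eq]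

lemma D2inv : pr1 * py⁻¹ * pr1 = py * prt⁻¹ := by
  calc pr1 * py⁻¹ * pr1 = pr1⁻¹ * py⁻¹ * pr1⁻¹ := by rw [L1']
  _ = (pr1 * py * pr1)⁻¹ := by group
  _ = (py⁻¹ * prt)⁻¹ := by rw [D2]
  _ = prt⁻¹ * py := by group
  _ = py * prt⁻¹ := by rw [cty.inv_left.eq]

lemma D3 : py * px = px * py * prt := by
  have hfac : py * pr1 * px = pr1 * pr3 * pr2 := by
    calc py * pr1 * px = pr1 * pr3 * (pr1 * pr1) * pr2 := by rw [py, px]; group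
    _ = pr1 * pr3 * pr2 := by rw [L1]; group
  have hg2 : prt = (py * pr1 * px) * (py * pr1 * px) := by rw [hfac]; exact Lt5
  have hconj : pr1 * (px * py) * pr1 = (px⁻¹ * prt) * (py⁻¹ * prt) := by
    calc pr1 * (px * py) * pr1 = pr1 * px * (pr1 * pr1) * py * pr1 := by rw [L1]; group
    _ = (pr1 * px * pr1) * (pr1 * py * pr1) := by group
    _ = (px⁻¹ * prt) * (py⁻¹ * prt) := by rw [D1, D2]
  have hgg : prt = py * ((px⁻¹ * prt) * (py⁻¹ * prt)) * px := by
    calc prt = (py * pr1 * px) * (py * pr1 * px) := hg2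
    _ = py * (pr1 * (px * py) * pr1) * px := by group
    _ = py * ((px⁻¹ * prt) * (py⁻¹ * prt)) * px := by rw [hconj]
  have hmove : py * ((px⁻¹ * prt) * (py⁻¹ * prt)) * px
      = (py * px⁻¹ * py⁻¹ * px) * (prt * prt) := by
    calc py * ((px⁻¹ * prt) * (py⁻¹ * prt)) * px
        = py * px⁻¹ * (prt * py⁻¹) * (prt * px) := by group
    _ = py * px⁻¹ * (py⁻¹ * prt) * (prt * px) := by rw [cty.inv_right.eq]
    _ = py * px⁻¹ * py⁻¹ * (prt * (prt * px)) := by group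
    _ = py * px⁻¹ * py⁻¹ * (prt * (px * prt)) := by rw [ctx.eq]
    _ = py * px⁻¹ * py⁻¹ * ((prt * px) * prt) := by group
    _ = py * px⁻¹ * py⁻¹ * ((px * prt) * prt) := by rw [ctx.eq]
    _ = (py * px⁻¹ * py⁻¹ * px) * (prt * prt) := by group
  have h0 : prt = (py * px⁻¹ * py⁻¹ * px) * (prt * prt) := hgg.trans hmove
  have key : py * px⁻¹ * py⁻¹ * px = prt⁻¹ := by
    have h1 := congrArg (fun z => z * (prt * prt)⁻¹) h0
    calc py * px⁻¹ * py⁻¹ * px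
        = py * px⁻¹ * py⁻¹ * px * (prt * prt) * (prt * prt)⁻¹ := by group
    _ = prt * (prt * prt)⁻¹ := h1.symm
    _ = prt⁻¹ := by group
  have key2 : py * px⁻¹ = prt⁻¹ * px⁻¹ * py := by
    calc py * px⁻¹ = (py * px⁻¹ * py⁻¹ * px) * (px⁻¹ * py) := by group
    _ = prt⁻¹ * (px⁻¹ * py) := by rw [key]
    _ = prt⁻¹ * px⁻¹ * py := by group
  have key3 : px * py⁻¹ = py⁻¹ * px * prt := by
    calc px * py⁻¹ = (py * px⁻¹)⁻¹ := by group
    _ = (prt⁻¹ * px⁻¹ * py)⁻¹ := by rw [key2]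
    _ = py⁻¹ * px * prt := by group
  calc py * px = py * (px * py⁻¹) * py := by group
  _ = py * (py⁻¹ * px * prt) * py := by rw [key3]
  _ = px * (prt * py) := by group
  _ = px * (py * prt) := by rw [cty.eq]
  _ = px * py * prt := by group

lemma D3' : py⁻¹ * px = px * py⁻¹ * prt⁻¹ := by
  have h2 : px * py = py * px * prt⁻¹ := by
    calc px * py = (px * py * prt) * prt⁻¹ := by group
    _ = (py * px) * prt⁻¹ := by rw [← D3]
  calc py⁻¹ * px = py⁻¹ * (px * py) * py⁻¹ := by group
  _ = py⁻¹ * (py * px * prt⁻¹) * py⁻¹ := by rw [h2]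
  _ = px * (prt⁻¹ * py⁻¹) := by group
  _ = px * (py⁻¹ * prt⁻¹) := by rw [cty.inv_left.inv_right.eq]
  _ = px * py⁻¹ * prt⁻¹ := by group

lemma D4 (n : ℤ) : py ^ n * px = px * py ^ n * prt ^ n := by
  induction n using Int.induction_on with
  | zero => group
  | succ n ih =>
    calc py ^ ((n:ℤ)+1) * px = py * (py ^ (n:ℤ) * px) := by group
    _ = py * (px * py ^ (n:ℤ) * prt ^ (n:ℤ)) := by rw [ih]
    _ = (py * px) * (py ^ (n:ℤ) * prt ^ (n:ℤ)) := by group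
    _ = (px * py * prt) * (py ^ (n:ℤ) * prt ^ (n:ℤ)) := by rw [D3]
    _ = px * py * (prt * py ^ (n:ℤ)) * prt ^ (n:ℤ) := by group
    _ = px * py * (py ^ (n:ℤ) * prt) * prt ^ (n:ℤ) := by rw [(cty.zpow_right (n:ℤ)).eq]
    _ = px * py ^ ((n:ℤ)+1) * prt ^ ((n:ℤ)+1) := by group
  | pred n ih =>
    calc py ^ (-(n:ℤ)-1) * px = py⁻¹ * (py ^ (-(n:ℤ)) * px) := by group
    _ = py⁻¹ * (px * py ^ (-(n:ℤ)) * prt ^ (-(n:ℤ))) := by rw [ih]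
    _ = (py⁻¹ * px) * (py ^ (-(n:ℤ)) * prt ^ (-(n:ℤ))) := by group
    _ = (px * py⁻¹ * prt⁻¹) * (py ^ (-(n:ℤ)) * prt ^ (-(n:ℤ))) := by rw [D3']
    _ = px * py⁻¹ * (prt⁻¹ * py ^ (-(n:ℤ))) * prt ^ (-(n:ℤ)) := by group
    _ = px * py⁻¹ * (py ^ (-(n:ℤ)) * prt⁻¹) * prt ^ (-(n:ℤ)) := by
          rw [(cty.inv_left.zpow_right (-(n:ℤ))).eq]
    _ = px * py ^ (-(n:ℤ)-1) * prt ^ (-(n:ℤ)-1) := by group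

lemma D4' (n : ℤ) : py ^ n * px⁻¹ = px⁻¹ * py ^ n * prt ^ (-n) := by
  have h1 : px⁻¹ * py ^ n = py ^ n * px⁻¹ * prt ^ n := by
    calc px⁻¹ * py ^ n = px⁻¹ * (py ^ n * px) * px⁻¹ := by group
    _ = px⁻¹ * (px * py ^ n * prt ^ n) * px⁻¹ := by rw [D4]
    _ = py ^ n * (prt ^ n * px⁻¹) := by group
    _ = py ^ n * (px⁻¹ * prt ^ n) := by rw [((ctx.zpow_left n).inv_right).eq]
    _ = py ^ n * px⁻¹ * prt ^ n := by group
  calc py ^ n * px⁻¹ = (py ^ n * px⁻¹ * prt ^ n) * prt ^ (-n) := by group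
  _ = (px⁻¹ * py ^ n) * prt ^ (-n) := by rw [← h1]
  _ = px⁻¹ * py ^ n * prt ^ (-n) := by group

lemma D5 (m : ℤ) : pr1 * px ^ m * pr1 = px ^ (-m) * prt ^ m := by
  induction m using Int.induction_on with
  | zero =>
    calc pr1 * px ^ (0:ℤ) * pr1 = pr1 * pr1 := by group
    _ = 1 := L1
    _ = px ^ (-(0:ℤ)) * prt ^ (0:ℤ) := by group
  | succ n ih =>
    calc pr1 * px ^ ((n:ℤ)+1) * pr1 = (pr1 * px ^ (n:ℤ) * pr1) * (pr1 * px * pr1) := by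
          rw [show (pr1 * px ^ (n:ℤ) * pr1) * (pr1 * px * pr1)
              = pr1 * px ^ (n:ℤ) * (pr1 * pr1) * px * pr1 by group, L1]
          group
    _ = (px ^ (-(n:ℤ)) * prt ^ (n:ℤ)) * (px⁻¹ * prt) := by rw [ih, D1]
    _ = px ^ (-(n:ℤ)) * (prt ^ (n:ℤ) * px⁻¹) * prt := by group
    _ = px ^ (-(n:ℤ)) * (px⁻¹ * prt ^ (n:ℤ)) * prt := by rw [((ctx.zpow_left (n:ℤ)).inv_right).eq]
    _ = px ^ (-((n:ℤ)+1)) * prt ^ ((n:ℤ)+1) := by group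
  | pred n ih =>
    calc pr1 * px ^ (-(n:ℤ)-1) * pr1 = (pr1 * px ^ (-(n:ℤ)) * pr1) * (pr1 * px⁻¹ * pr1) := by
          rw [show (pr1 * px ^ (-(n:ℤ)) * pr1) * (pr1 * px⁻¹ * pr1)
              = pr1 * px ^ (-(n:ℤ)) * (pr1 * pr1) * px⁻¹ * pr1 by group, L1]
          group
    _ = (px ^ ((n:ℤ)) * prt ^ (-(n:ℤ))) * (px * prt⁻¹) := by rw [ih, D1inv]; group
    _ = px ^ ((n:ℤ)) * (prt ^ (-(n:ℤ)) * px) * prt⁻¹ := by group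
    _ = px ^ ((n:ℤ)) * (px * prt ^ (-(n:ℤ))) * prt⁻¹ := by rw [(ctx.zpow_left (-(n:ℤ))).eq]
    _ = px ^ (-(-(n:ℤ)-1)) * prt ^ (-(n:ℤ)-1) := by group

lemma D6 (n : ℤ) : pr1 * py ^ n * pr1 = py ^ (-n) * prt ^ n := by
  induction n using Int.induction_on with
  | zero =>
    calc pr1 * py ^ (0:ℤ) * pr1 = pr1 * pr1 := by group
    _ = 1 := L1
    _ = py ^ (-(0:ℤ)) * prt ^ (0:ℤ) := by group
  | succ n ih =>
    calc pr1 * py ^ ((n:ℤ)+1) * pr1 = (pr1 * py ^ (n:ℤ) * pr1) * (pr1 * py * pr1) := by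
          rw [show (pr1 * py ^ (n:ℤ) * pr1) * (pr1 * py * pr1)
              = pr1 * py ^ (n:ℤ) * (pr1 * pr1) * py * pr1 by group, L1]
          group
    _ = (py ^ (-(n:ℤ)) * prt ^ (n:ℤ)) * (py⁻¹ * prt) := by rw [ih, D2]
    _ = py ^ (-(n:ℤ)) * (prt ^ (n:ℤ) * py⁻¹) * prt := by group
    _ = py ^ (-(n:ℤ)) * (py⁻¹ * prt ^ (n:ℤ)) * prt := by rw [((cty.zpow_left (n:ℤ)).inv_right).eq]
    _ = py ^ (-((n:ℤ)+1)) * prt ^ ((n:ℤ)+1) := by group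
  | pred n ih =>
    calc pr1 * py ^ (-(n:ℤ)-1) * pr1 = (pr1 * py ^ (-(n:ℤ)) * pr1) * (pr1 * py⁻¹ * pr1) := by
          rw [show (pr1 * py ^ (-(n:ℤ)) * pr1) * (pr1 * py⁻¹ * pr1)
              = pr1 * py ^ (-(n:ℤ)) * (pr1 * pr1) * py⁻¹ * pr1 by group, L1]
          group
    _ = (py ^ ((n:ℤ)) * prt ^ (-(n:ℤ))) * (py * prt⁻¹) := by rw [ih, D2inv]; group
    _ = py ^ ((n:ℤ)) * (prt ^ (-(n:ℤ)) * py) * prt⁻¹ := by group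
    _ = py ^ ((n:ℤ)) * (py * prt ^ (-(n:ℤ))) * prt⁻¹ := by rw [(cty.zpow_left (-(n:ℤ))).eq]
    _ = py ^ (-(-(n:ℤ)-1)) * prt ^ (-(n:ℤ)-1) := by group

lemma swap_x_r1 (m : ℤ) : px ^ m * pr1 = pr1 * (px ^ (-m) * prt ^ m) := by
  calc px ^ m * pr1 = pr1 * (pr1 * px ^ m * pr1) := by
        rw [show pr1 * (pr1 * px ^ m * pr1) = (pr1 * pr1) * (px ^ m * pr1) by group, L1, one_mul]
  _ = pr1 * (px ^ (-m) * prt ^ m) := by rw [D5]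

lemma swap_y_r1 (n : ℤ) : py ^ n * pr1 = pr1 * (py ^ (-n) * prt ^ n) := by
  calc py ^ n * pr1 = pr1 * (pr1 * py ^ n * pr1) := by
        rw [show pr1 * (pr1 * py ^ n * pr1) = (pr1 * pr1) * (py ^ n * pr1) by group, L1, one_mul]
  _ = pr1 * (py ^ (-n) * prt ^ n) := by rw [D6]

/-! ### Normal form in the presented group -/

def NFprop (p : PresentedGroup rels) : Prop :=
  ∃ (c : Bool) (m n k : ℤ), p = (cond c pr1 1) * px ^ m * py ^ n * prt ^ k

lemma NF_one : NFprop 1 := ⟨false, 0, 0, 0, by simp⟩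

lemma NF_t {p} (h : NFprop p) : NFprop (p * prt) := by
  obtain ⟨c, m, n, k, rfl⟩ := h
  exact ⟨c, m, n, k+1, by group⟩

lemma NF_tinv {p} (h : NFprop p) : NFprop (p * prt⁻¹) := by
  obtain ⟨c, m, n, k, rfl⟩ := h
  exact ⟨c, m, n, k-1, by group⟩

lemma NF_y {p} (h : NFprop p) : NFprop (p * py) := by
  obtain ⟨c, m, n, k, rfl⟩ := h
  refine ⟨c, m, n+1, k, ?_⟩
  calc (cond c pr1 1) * px ^ m * py ^ n * prt ^ k * py
      = (cond c pr1 1) * px ^ m * py ^ n * (prt ^ k * py) := by group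
  _ = (cond c pr1 1) * px ^ m * py ^ n * (py * prt ^ k) := by rw [(cty.zpow_left k).eq]
  _ = (cond c pr1 1) * px ^ m * py ^ (n+1) * prt ^ k := by group

lemma NF_yinv {p} (h : NFprop p) : NFprop (p * py⁻¹) := by
  obtain ⟨c, m, n, k, rfl⟩ := h
  refine ⟨c, m, n-1, k, ?_⟩
  calc (cond c pr1 1) * px ^ m * py ^ n * prt ^ k * py⁻¹
      = (cond c pr1 1) * px ^ m * py ^ n * (prt ^ k * py⁻¹) := by group
  _ = (cond c pr1 1) * px ^ m * py ^ n * (py⁻¹ * prt ^ k) := by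
        rw [((cty.zpow_left k).inv_right).eq]
  _ = (cond c pr1 1) * px ^ m * py ^ (n-1) * prt ^ k := by group

lemma NF_x {p} (h : NFprop p) : NFprop (p * px) := by
  obtain ⟨c, m, n, k, rfl⟩ := h
  refine ⟨c, m+1, n, k+n, ?_⟩
  calc (cond c pr1 1) * px ^ m * py ^ n * prt ^ k * px
      = (cond c pr1 1) * px ^ m * py ^ n * (prt ^ k * px) := by group
  _ = (cond c pr1 1) * px ^ m * py ^ n * (px * prt ^ k) := by rw [(ctx.zpow_left k).eq]
  _ = (cond c pr1 1) * px ^ m * (py ^ n * px) * prt ^ k := by group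
  _ = (cond c pr1 1) * px ^ m * (px * py ^ n * prt ^ n) * prt ^ k := by rw [D4]
  _ = (cond c pr1 1) * px ^ (m+1) * py ^ n * prt ^ (k+n) := by group

lemma NF_xinv {p} (h : NFprop p) : NFprop (p * px⁻¹) := by
  obtain ⟨c, m, n, k, rfl⟩ := h
  refine ⟨c, m-1, n, k-n, ?_⟩
  calc (cond c pr1 1) * px ^ m * py ^ n * prt ^ k * px⁻¹
      = (cond c pr1 1) * px ^ m * py ^ n * (prt ^ k * px⁻¹) := by group
  _ = (cond c pr1 1) * px ^ m * py ^ n * (px⁻¹ * prt ^ k) := by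
        rw [((ctx.zpow_left k).inv_right).eq]
  _ = (cond c pr1 1) * px ^ m * (py ^ n * px⁻¹) * prt ^ k := by group
  _ = (cond c pr1 1) * px ^ m * (px⁻¹ * py ^ n * prt ^ (-n)) * prt ^ k := by rw [D4']
  _ = (cond c pr1 1) * px ^ (m-1) * py ^ n * prt ^ (k-n) := by group

lemma NF_r1 {p} (h : NFprop p) : NFprop (p * pr1) := by
  obtain ⟨c, m, n, k, rfl⟩ := h
  have key : (cond c pr1 1) * px ^ m * py ^ n * prt ^ k * pr1
      = ((cond c pr1 1) * pr1) * (px ^ (-m) * py ^ (-n) * prt ^ (m+n+k)) := by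
    calc (cond c pr1 1) * px ^ m * py ^ n * prt ^ k * pr1
        = (cond c pr1 1) * px ^ m * py ^ n * (prt ^ k * pr1) := by group
    _ = (cond c pr1 1) * px ^ m * py ^ n * (pr1 * prt ^ k) := by rw [(ct1.zpow_left k).eq]
    _ = (cond c pr1 1) * px ^ m * (py ^ n * pr1) * prt ^ k := by group
    _ = (cond c pr1 1) * px ^ m * (pr1 * (py ^ (-n) * prt ^ n)) * prt ^ k := by rw [swap_y_r1]
    _ = (cond c pr1 1) * (px ^ m * pr1) * (py ^ (-n) * prt ^ n) * prt ^ k := by group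
    _ = (cond c pr1 1) * (pr1 * (px ^ (-m) * prt ^ m)) * (py ^ (-n) * prt ^ n) * prt ^ k := by
          rw [swap_x_r1]
    _ = (cond c pr1 1) * pr1 * px ^ (-m) * (prt ^ m * py ^ (-n)) * prt ^ (n+k) := by group
    _ = (cond c pr1 1) * pr1 * px ^ (-m) * (py ^ (-n) * prt ^ m) * prt ^ (n+k) := by
          rw [((cty.zpow_left m).zpow_right (-n)).eq]
    _ = ((cond c pr1 1) * pr1) * (px ^ (-m) * py ^ (-n) * prt ^ (m+n+k)) := by group
  cases c with
  | false =>
    refine ⟨true, -m, -n, m+n+k, ?_⟩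
    rw [key]
    simp only [Bool.cond_false, Bool.cond_true, one_mul]
    group
  | true =>
    refine ⟨false, -m, -n, m+n+k, ?_⟩
    rw [key]
    simp only [Bool.cond_false, Bool.cond_true]
    rw [L1]
    group

lemma NF_r1inv {p} (h : NFprop p) : NFprop (p * pr1⁻¹) := by
  rw [L1']
  exact NF_r1 h

lemma hpr2 : pr2 = pr1 * px := by
  rw [px, ← mul_assoc, L1, one_mul]

lemma hpr3 : pr3 = pr1 * py := by
  rw [py, ← mul_assoc, L1, one_mul]

lemma NF_r2 {p} (h : NFprop p) : NFprop (p * pr2) := by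
  rw [hpr2, ← mul_assoc]
  exact NF_x (NF_r1 h)

lemma NF_r2inv {p} (h : NFprop p) : NFprop (p * pr2⁻¹) := by
  have h2 : pr2⁻¹ = px⁻¹ * pr1 := by rw [hpr2, _root_.mul_inv_rev, L1']
  rw [h2, ← mul_assoc]
  exact NF_r1 (NF_xinv h)

lemma NF_r3 {p} (h : NFprop p) : NFprop (p * pr3) := by
  rw [hpr3, ← mul_assoc]
  exact NF_y (NF_r1 h)

lemma NF_r3inv {p} (h : NFprop p) : NFprop (p * pr3⁻¹) := by
  have h2 : pr3⁻¹ = py⁻¹ * pr1 := by rw [hpr3, _root_.mul_inv_rev, L1']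
  rw [h2, ← mul_assoc]
  exact NF_r1 (NF_yinv h)

lemma NF_all (p : PresentedGroup rels) : NFprop p := by
  have htop : p ∈ Subgroup.closure (Set.range (PresentedGroup.of (rels := rels))) := by
    rw [PresentedGroup.closure_range_of]
    trivial
  have hmem : p ∈ Submonoid.closure (Set.range (PresentedGroup.of (rels := rels))
      ∪ (Set.range (PresentedGroup.of (rels := rels)))⁻¹) := by
    rw [← Subgroup.closure_toSubmonoid]
    exact htop
  have main : ∀ q, NFprop q → NFprop (q * p) := by
    refine Submonoid.closure_induction ?_ ?_ ?_ hmem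
    · rintro x hx
      rcases hx with ⟨i, rfl⟩ | hinv
      · fin_cases i
        · exact fun q hq => NF_r1 hq
        · exact fun q hq => NF_r2 hq
        · exact fun q hq => NF_r3 hq
        · exact fun q hq => NF_t hq
      · rw [Set.mem_inv] at hinv
        obtain ⟨i, hi⟩ := hinv
        have hx : x = (PresentedGroup.of (rels := rels) i)⁻¹ := by rw [hi, inv_inv]
        subst hx
        fin_cases i
        · exact fun q hq => NF_r1inv hq
        · exact fun q hq => NF_r2inv hq
        · exact fun q hq => NF_r3inv hq
        · exact fun q hq => NF_tinv hq
    · exact fun q hq => by simpa using hq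
    · intro x y hx hy ihx ihy q hq
      rw [← mul_assoc]
      exact ihy _ (ihx _ hq)
  simpa using main 1 NF_one

/-! ### Injectivity -/

lemma fhom_pr1 : fhom pr1 = R₁s := fhom_of0
lemma fhom_prt : fhom prt = Ts := fhom_of3
lemma fhom_px : fhom px = Xs := by
  rw [px, pr1, pr2, _root_.map_mul, fhom_of0, fhom_of1]; rfl
lemma fhom_py : fhom py = Ys := by
  rw [py, pr1, pr3, _root_.map_mul, fhom_of0, fhom_of2]; rfl

lemma fhom_injective_aux (p : PresentedGroup rels) (h : fhom p = 1) : p = 1 := by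
  obtain ⟨c, m, n, k, rfl⟩ := NF_all p
  cases c with
  | true =>
    exfalso
    simp only [Bool.cond_true] at h
    rw [_root_.map_mul, _root_.map_mul, _root_.map_mul, map_zpow, map_zpow, map_zpow,
      fhom_pr1, fhom_px, fhom_py, fhom_prt] at h
    have hmmm := congrArg mm h
    rw [mm_mul, mm_mul, mm_mul, mm_R₁s, mm_Xs_zpow, mm_Ys_zpow, mm_Ts_zpow, quad_mul,
      quad_mul, quad_mul, mm_one, ← quad_one] at hmmm
    have hE := congrFun (congrFun hmmm 1) 1
    norm_num [quad] at hE
  | false =>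
    simp only [Bool.cond_false, one_mul] at h ⊢
    rw [_root_.map_mul, _root_.map_mul, map_zpow, map_zpow, map_zpow,
      fhom_px, fhom_py, fhom_prt] at h
    have hmmm := congrArg mm h
    rw [mm_mul, mm_mul, mm_Xs_zpow, mm_Ys_zpow, mm_Ts_zpow, quad_mul, quad_mul,
      mm_one, ← quad_one] at hmmm
    have hA := congrFun (congrFun hmmm 0) 1
    simp [quad] at hA
    have hmn := omega_ne_real_aux (m+n) (-n) (by push_cast; linear_combination hA)
    have hm : m = 0 := by omega
    have hn : n = 0 := by omega
    subst hm; subst hn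
    have h2 : Ts ^ k = 1 := by simpa using h
    have h3 := congrArg mm h2
    rw [mm_Ts_zpow, mm_one, ← quad_one] at h3
    have hB := congrFun (congrFun h3 0) 2
    simp [quad] at hB
    have hk : k = 0 := by
      rcases hB with hB | hB
      · exact hB
      · exfalso
        have := omega_ne_real_aux (-1) 2 (by push_cast; linear_combination hB)
        omega
    subst hk
    simp

/-- **Presentation of the stabiliser** (Proposition 3.4 of the paper):
`(Γ₁₁)∞ = ⟨ R₁, R₂, R₃, T | R₁² = [T,R₁] = T R₂⁻² = T R₃⁻² = T (R₁R₃R₂)⁻² = id ⟩`, where `(Γ₁₁)∞` is the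
stabiliser of `q∞` in `PU(2,1;O₁₁)`, i.e. the quotient of `stab` by `{±1}`. -/
theorem stabiliser_presentation :
    ∃ φ : PresentedGroup rels ≃* (stab ⧸ Subgroup.zpowers negOne),
      φ (PresentedGroup.of 0) = QuotientGroup.mk R₁s ∧
      φ (PresentedGroup.of 1) = QuotientGroup.mk R₂s ∧
      φ (PresentedGroup.of 2) = QuotientGroup.mk R₃s ∧
      φ (PresentedGroup.of 3) = QuotientGroup.mk Ts := by
  set φ' : PresentedGroup rels →* stab ⧸ Subgroup.zpowers negOne :=
    (QuotientGroup.mk' (Subgroup.zpowers negOne)).comp fhom with hφ'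
  have hinj : Function.Injective φ' := by
    rw [← MonoidHom.ker_eq_bot_iff, eq_bot_iff]
    intro p hp
    have h1 : fhom p ∈ Subgroup.zpowers negOne := by
      rw [MonoidHom.mem_ker, hφ', MonoidHom.comp_apply] at hp
      rwa [← QuotientGroup.ker_mk' (Subgroup.zpowers negOne), MonoidHom.mem_ker]
    rcases mem_zpowers_negOne h1 with h | h
    · rw [Subgroup.mem_bot]
      exact fhom_injective_aux p h
    · exfalso
      have h2 := fhom_mem_S0 p
      rw [h] at h2
      have h3 : mm negOne 0 0 = 1 := h2
      rw [mm_negOne] at h3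
      norm_num [Matrix.neg_apply, Matrix.one_apply] at h3
  have hsurj : Function.Surjective φ' := by
    intro q
    refine QuotientGroup.induction_on q ?_
    intro V
    obtain ⟨W, hWV, e, a, b, he, hm⟩ := classify V
    obtain ⟨p, hp⟩ := norm_in_range W e a b he hm
    refine ⟨p, ?_⟩
    have hstep : φ' p = QuotientGroup.mk W := by
      show QuotientGroup.mk (fhom p) = _
      rw [hp]
    rw [hstep]
    rcases hWV with rfl | rfl
    · rfl
    · have h1 : (QuotientGroup.mk negOne : stab ⧸ Subgroup.zpowers negOne) = 1 :=
        (QuotientGroup.eq_one_iff _).mpr (Subgroup.mem_zpowers _)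
      rw [QuotientGroup.mk_mul, h1, one_mul]
  refine ⟨MulEquiv.ofBijective φ' (show Function.Bijective φ' from ⟨hinj, hsurj⟩), ?_, ?_, ?_, ?_⟩ <;>
    rw [MulEquiv.ofBijective_apply]
  · show QuotientGroup.mk (fhom (PresentedGroup.of 0)) = _
    rw [fhom_of0]
  · show QuotientGroup.mk (fhom (PresentedGroup.of 1)) = _
    rw [fhom_of1]
  · show QuotientGroup.mk (fhom (PresentedGroup.of 2)) = _
    rw [fhom_of2]
  · show QuotientGroup.mk (fhom (PresentedGroup.of 3)) = _
    rw [fhom_of3]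

end
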